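/- arXiv:1912.12962 — 3 statements merged into one kernel-verified Lean document; each statement's English description precedes it below -/
import Mathlib

section
/- Let T be a Silver tree with stem decomposition given by strings u₀, u₁, u₂, …, let m = |u₀|, and let s = 0^m ⌢ ⟨1⟩ (the string of m zeros followed by 1). Then s ⁺ T = T. -/
/-- Cantor-space equivalence E₀: x E₀ y iff they differ in finitely many coordinates. -/
def E0 (x y : ℕ → Bool) : Prop := {n | x n ≠ y n}.Finite

/-- E_e: the symmetric difference is finite of even cardinality. -/
def Ee (x y : ℕ → Bool) : Prop :=
  {n | x n ≠ y n}.Finite ∧ Even (Nat.card {n | x n ≠ y n})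

/-- Full branch-string of a Silver tree scheme `u` along choices `i`. -/
def sFull (u : ℕ → List Bool) : List Bool → List Bool
  | [] => []
  | i :: rest => (u 0 ++ [i]) ++ sFull (fun n => u (n + 1)) rest

/-- The Silver tree determined by the sequence of strings `u`:
all strings u₀⌢⟨i₀⟩⌢…⌢u_m⌢⟨i_m⟩ together with their initial segments. -/
def silverTree (u : ℕ → List Bool) : Set (List Bool) :=
  {t | ∃ i : List Bool, t <+: sFull u i}

/-- Pointwise mod-2 shift of a finite string `t` by a finite string `s`. -/
def shiftStr (s t : List Bool) : List Bool :=
  List.ofFn (fun k : Fin t.length => xor (t.get k) (s.getD k false))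

/-- Pointwise mod-2 shift of a real `a` by a finite string `s`. -/
def shiftReal (s : List Bool) (a : ℕ → Bool) : ℕ → Bool :=
  fun k => xor (a k) (s.getD k false)

/-- The set of branches of a tree `T ⊆ 2^{<ω}`. -/
def branches (T : Set (List Bool)) : Set (ℕ → Bool) :=
  {x | ∀ k, (List.ofFn fun j : Fin k => x j) ∈ T}
lemma shiftStr_length (s t : List Bool) : (shiftStr s t).length = t.length := by
  simp [shiftStr]

lemma shiftStr_getElem (s t : List Bool) (k : ℕ) (h : k < (shiftStr s t).length) :
    (shiftStr s t)[k] = xor (t[k]'(by simpa [shiftStr_length] using h)) (s.getD k false) := by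
  simp [shiftStr]

lemma shiftStr_invol (s t : List Bool) : shiftStr s (shiftStr s t) = t := by
  apply List.ext_getElem (by simp [shiftStr_length])
  intro k h1 h2
  simp [shiftStr_getElem, Bool.xor_assoc]

lemma shiftStr_prefix (s t w : List Bool) (h : t <+: w) :
    shiftStr s t <+: shiftStr s w := by
  have hl : t.length ≤ w.length := h.length_le
  rw [List.prefix_iff_eq_take]
  apply List.ext_getElem (by simp [shiftStr_length]; omega)
  intro k h1 h2
  have hk : k < t.length := by simpa [shiftStr_length] using h1
  have hkw : k < w.length := lt_of_lt_of_le hk hl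
  rw [List.getElem_take, shiftStr_getElem, shiftStr_getElem]
  rw [h.getElem hk]

lemma replicate_getD (m k : ℕ) :
    (List.replicate m false ++ [true]).getD k false = decide (k = m) := by
  rcases lt_trichotomy k m with h | h | h
  · rw [List.getD_eq_getElem _ _ (by simp; omega)]
    rw [List.getElem_append_left (by simpa using h)]
    simp; omega
  · subst h
    rw [List.getD_eq_getElem _ _ (by simp)]
    rw [List.getElem_append_right (by simp)]
    simp
  · rw [List.getD_eq_default _ _ (by simp; omega)]
    simp; omega

lemma shiftStr_sFull (u : ℕ → List Bool) (i : Bool) (r : List Bool) :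
    shiftStr (List.replicate (u 0).length false ++ [true]) (sFull u (i :: r))
      = sFull u ((!i) :: r) := by
  set m := (u 0).length
  have hlen : ∀ b : Bool, (sFull u (b :: r)).length = m + 1 + (sFull (fun n => u (n+1)) r).length := by
    intro b; simp [sFull]; omega
  apply List.ext_getElem (by simp [shiftStr_length, hlen])
  intro k h1 h2
  rw [shiftStr_getElem, replicate_getD]
  have hk : k < m + 1 + (sFull (fun n => u (n+1)) r).length := by
    rw [hlen] at h2; exact h2
  rcases lt_trichotomy k m with h | h | h
  · have : ∀ b : Bool, (sFull u (b :: r))[k]'(by rw [hlen]; omega) = (u 0)[k]'h := by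
      intro b
      simp only [sFull]
      rw [List.getElem_append_left (by simp [m] at h ⊢; omega)]
      rw [List.getElem_append_left (by simpa using h)]
    rw [this, this]
    simp [show k ≠ m by omega]
  · have : ∀ b : Bool, (sFull u (b :: r))[k]'(by rw [hlen]; omega) = b := by
      intro b
      simp only [sFull]
      rw [List.getElem_append_left (by simp [m]; omega)]
      rw [List.getElem_append_right h.ge]
      simp
    rw [this, this]
    simp [h]
  · have : ∀ b : Bool, (sFull u (b :: r))[k]'(by rw [hlen]; omega) =
        (sFull (fun n => u (n+1)) r)[k - (m+1)]'(by omega) := by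
      intro b
      simp only [sFull]
      rw [List.getElem_append_right (by simp [m]; omega)]
      simp [m]
    rw [this, this]
    simp [show k ≠ m by omega]

lemma shiftStr_mapsTo (u : ℕ → List Bool) (t : List Bool) (ht : t ∈ silverTree u) :
    shiftStr (List.replicate (u 0).length false ++ [true]) t ∈ silverTree u := by
  obtain ⟨i, hpre⟩ := ht
  cases i with
  | nil =>
    have : t = [] := List.prefix_nil.mp hpre
    subst this
    exact ⟨[], by simp [shiftStr, sFull]⟩
  | cons i0 rest =>
    refine ⟨(!i0) :: rest, ?_⟩
    rw [← shiftStr_sFull]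
    exact shiftStr_prefix _ _ _ hpre


/-- for s = 0^{|u₀|}⌢⟨1⟩, the shift s ⁺ T fixes the Silver tree T. -/
theorem silver_shift_invariant (u : ℕ → List Bool) :
    shiftStr (List.replicate (u 0).length false ++ [true]) '' silverTree u
      = silverTree u := by
  apply Set.Subset.antisymm
  · rintro _ ⟨t, ht, rfl⟩
    exact shiftStr_mapsTo u t ht
  · intro t ht
    exact ⟨_, shiftStr_mapsTo u t ht, shiftStr_invol _ t⟩
end

section
/- If T is a Silver tree and a ∈ [T] (a is a branch through T), then for the string s = 0^m ⌢ ⟨1⟩ where m = |u₀(T)|, the real b = s ⁺ a also belongs to [T], and a E₀ b but not a E_e b. -/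
lemma set_prefix_set (X Y : List Bool) (v : Bool) (m : ℕ) (hm : m < X.length)
    (h : X <+: Y) : X.set m v <+: Y.set m v := by
  obtain ⟨t, rfl⟩ := h
  exact ⟨t, by rw [List.set_append_left _ _ hm]⟩

lemma sFull_flip (u : ℕ → List Bool) (c : Bool) (rest : List Bool) :
    sFull u ((!c) :: rest) = (sFull u (c :: rest)).set (u 0).length (!c) := by
  simp [sFull, List.set_append]

/-- for a branch a of a Silver tree, b = s ⁺ a (s = 0^{|u₀|}⌢⟨1⟩)
is again a branch, E₀- but not E_e-equivalent to a. -/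
theorem silver_branch_shift (u : ℕ → List Bool) (a : ℕ → Bool)
    (ha : a ∈ branches (silverTree u)) :
    shiftReal (List.replicate (u 0).length false ++ [true]) a ∈ branches (silverTree u) ∧
    E0 a (shiftReal (List.replicate (u 0).length false ++ [true]) a) ∧
    ¬ Ee a (shiftReal (List.replicate (u 0).length false ++ [true]) a) := by
  set m := (u 0).length with hm
  set s := List.replicate m false ++ [true] with hs
  set b := shiftReal s a with hbdef
  have hgetD : ∀ k, s.getD k false = decide (k = m) := by
    intro k
    rcases lt_trichotomy k m with h | h | h
    · simp [hs, List.getD, List.getElem?_append_left, h, List.getElem?_replicate,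
        Nat.ne_of_lt h]
    · subst h; simp [hs, List.getD, List.getElem?_append_right]
    · have h1 : m + 1 ≤ k := h
      rw [hs, List.getD_eq_default _ _ (by simpa using h1)]
      simp [Nat.ne_of_gt h]
  have hb : ∀ k, b k = if k = m then !(a k) else a k := by
    intro k
    rw [hbdef]
    simp only [shiftReal, hgetD k]
    by_cases h : k = m <;> simp [h]
  have hdiff : {n | a n ≠ b n} = {m} := by
    ext n
    simp only [Set.mem_setOf_eq, Set.mem_singleton_iff, hb n]
    by_cases h : n = m <;> simp [h]
  refine ⟨?_, ?_, ?_⟩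
  · intro k
    by_cases hk : k ≤ m
    · have heq : (List.ofFn fun j : Fin k => b j) = (List.ofFn fun j : Fin k => a j) := by
        congr 1; funext j
        rw [hb]; exact if_neg (by have := j.2; omega)
      rw [heq]; exact ha k
    · push_neg at hk
      obtain ⟨i, hi⟩ := ha k
      have hlen : k ≤ (sFull u i).length := by simpa using hi.length_le
      match i with
      | [] => simp [sFull] at hlen; omega
      | c :: rest =>
        have hmX : m < (List.ofFn fun j : Fin k => a j).length := by simpa using hk
        have ham : a m = c := by
          have h1 := hi.getElem (i := m) (by simpa using hk)
          simp only [List.getElem_ofFn] at h1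
          rw [h1]
          simp [sFull, List.getElem_append, hm]
        have heq : (List.ofFn fun j : Fin k => b j)
            = (List.ofFn fun j : Fin k => a j).set m (!c) := by
          apply List.ext_getElem (by simp)
          intro j hj1 hj2
          simp only [List.getElem_ofFn, List.getElem_set, List.getElem_ofFn] at *
          by_cases h : j = m
          · subst h; simp [hb, ham]
          · rw [hb]; simp [h, Ne.symm h]
        refine ⟨(!c) :: rest, ?_⟩
        rw [heq, sFull_flip]
        exact set_prefix_set _ _ _ _ hmX hi
  · rw [E0, hdiff]; exact Set.finite_singleton m
  · rw [Ee, hdiff]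
    rintro ⟨-, h2⟩
    simp at h2
end

section
/- For any Silver tree T, the set of branches [T] meets both E_e-classes of the E₀-class of any of its branches: if a ∈ [T] then there exists b ∈ [T] with a E₀ b and not a E_e b. -/
theorem aux_getElem_append_cons {α : Type*} (M : List α) (x : α) (S : List α) {j d : ℕ}
    (hd : j = M.length + 1 + d) (h2 : d < S.length) (h1 : j < (M ++ x :: S).length) :
    (M ++ x :: S)[j] = S[d] := by
  rw [getElem_congr_idx hd, List.getElem_append_right (by omega)]
  rw [getElem_congr_idx (show M.length + 1 + d - M.length = d + 1 by omega)]
  simp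

/-- the branches of a Silver tree meet both E_e-classes of the
E₀-class of any of its branches. -/
theorem silver_meets_both (u : ℕ → List Bool) (a : ℕ → Bool)
    (ha : a ∈ branches (silverTree u)) :
    ∃ b ∈ branches (silverTree u), E0 a b ∧ ¬ Ee a b := by
  classical
  set p0 := (u 0).length with hp0
  set b : ℕ → Bool := fun k => if k = p0 then !(a k) else a k with hb
  have hdiff : {n | a n ≠ b n} = {p0} := by
    ext n
    simp only [Set.mem_setOf_eq, Set.mem_singleton_iff, hb]
    by_cases h : n = p0 <;> simp [h]
  refine ⟨b, ?_, ?_, ?_⟩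
  · intro k
    obtain ⟨i, hi⟩ := ha k
    by_cases hk : k ≤ p0
    · refine ⟨i, ?_⟩
      have heq : (List.ofFn fun j : Fin k => b j) = (List.ofFn fun j : Fin k => a j) := by
        refine congrArg List.ofFn (funext fun j => ?_)
        have : (j : ℕ) ≠ p0 := by omega
        simp [hb, this]
      rw [heq]; exact hi
    · push_neg at hk
      cases i with
      | nil =>
        exfalso
        have := hi.length_le
        simp [sFull] at this
        omega
      | cons i0 rest =>
        set S := sFull (fun n => u (n + 1)) rest with hS
        have hfull : sFull u (i0 :: rest) = u 0 ++ i0 :: S := by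
          simp [sFull, hS]
        rw [hfull] at hi
        have hlen : k ≤ (u 0 ++ i0 :: S).length := by
          have := hi.length_le; simpa using this
        have hget : ∀ j (hj : j < k), a j = (u 0 ++ i0 :: S)[j]'(hj.trans_le hlen) := by
          intro j hj
          have h := hi.getElem (show j < (List.ofFn fun j : Fin k => a j).length by
            simpa using hj)
          simpa using h
        have hfp0 : (u 0 ++ i0 :: S)[p0]'(by simp [hp0]) = i0 := by
          rw [List.getElem_append_right (Nat.le_refl _)]
          simp
        refine ⟨(!i0) :: rest, ?_⟩
        have hfull' : sFull u ((!i0) :: rest) = u 0 ++ (!i0) :: S := by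
          simp [sFull, hS]
        rw [hfull']
        have hlen' : k ≤ (u 0 ++ (!i0) :: S).length := by simpa using hlen
        rw [List.prefix_iff_eq_take]
        refine List.ext_getElem ?_ ?_
        · have h1 := hlen'
          simp at h1 ⊢
          omega
        · intro j hj1 hj2
          simp only [List.getElem_ofFn, List.getElem_take]
          have hjk : j < k := by simpa using hj1
          rcases lt_trichotomy j p0 with h | h | h
          · have hne : j ≠ p0 := by omega
            have e1 : (u 0 ++ (!i0) :: S)[j]'(hjk.trans_le hlen') = (u 0)[j]'h :=
              List.getElem_append_left h
            have e2 : (u 0 ++ i0 :: S)[j]'(hjk.trans_le hlen) = (u 0)[j]'h :=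
              List.getElem_append_left h
            simp only [hb, if_neg hne]
            rw [hget j hjk, e2, ← e1]
          · have e1 : (u 0 ++ (!i0) :: S)[j]'(hjk.trans_le hlen') = !i0 := by
              rw [getElem_congr_idx h, List.getElem_append_right (Nat.le_refl _)]
              simp
            have e2 : a j = i0 := by
              rw [hget j hjk, getElem_congr_idx h, hfp0]
            simp only [hb, if_pos h]
            rw [e2, e1]
          · have hne : j ≠ p0 := by omega
            have hdlt : j - p0 - 1 < S.length := by
              have := hjk.trans_le hlen
              simp at this
              omega
            have hd : j = (u 0).length + 1 + (j - p0 - 1) := by omega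
            have e1 : (u 0 ++ (!i0) :: S)[j]'(hjk.trans_le hlen') = S[j - p0 - 1] :=
              aux_getElem_append_cons _ _ _ hd hdlt _
            have e2 : (u 0 ++ i0 :: S)[j]'(hjk.trans_le hlen) = S[j - p0 - 1] :=
              aux_getElem_append_cons _ _ _ hd hdlt _
            simp only [hb, if_neg hne]
            rw [hget j hjk, e2, ← e1]
  · rw [E0, hdiff]; exact Set.finite_singleton _
  · rintro ⟨_, heven⟩
    rw [hdiff] at heven
    simp at heven
end
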